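/- arXiv:2007.11076 — 3 statements merged into one kernel-verified Lean document; each statement's English description precedes it below -/
import Mathlib

section
/- Let L: V₁ → V₂ be a linear operator between Banach spaces and C₁ ⊂ V₁, C₂ ⊂ V₂ closed convex cones with L(C₁) ⊂ C₂. If Δ = diam_{Θ₂}(L(C₁)) < ∞, then Θ₂(L(φ), L(ψ)) ≤ (1 − e^{−Δ})·Θ₁(φ, ψ) for all φ, ψ ∈ C₁. -/
open scoped ENNReal

/-- A cone `C ⊆ V \ {0}`. -/
structure IsCone {V : Type*} [NormedAddCommGroup V] [NormedSpace ℝ V] (C : Set V) : Prop where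
  zero_not_mem : (0 : V) ∉ C
  neg_not_mem : ∀ v ∈ C, -v ∉ C
  smul_mem : ∀ v ∈ C, ∀ t : ℝ, 0 < t → t • v ∈ C

/-- A closed convex cone. -/
structure IsClosedConvexCone {V : Type*} [NormedAddCommGroup V] [NormedSpace ℝ V]
    (C : Set V) extends IsCone C : Prop where
  add_mem : ∀ v ∈ C, ∀ w ∈ C, ∀ a b : ℝ, 0 < a → 0 < b → a • v + b • w ∈ C
  closed : closure C ⊆ C ∪ {0}

/-- `A(v,w) = sup {t > 0 : w - t v ∈ C}`, with `sup ∅ = 0`. -/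
noncomputable def coneA {V : Type*} [NormedAddCommGroup V] [NormedSpace ℝ V]
    (C : Set V) (v w : V) : ℝ≥0∞ :=
  sSup (ENNReal.ofReal '' {t : ℝ | 0 < t ∧ w - t • v ∈ C})

/-- `B(v,w) = inf {s > 0 : s v - w ∈ C}`, with `inf ∅ = +∞`. -/
noncomputable def coneB {V : Type*} [NormedAddCommGroup V] [NormedSpace ℝ V]
    (C : Set V) (v w : V) : ℝ≥0∞ :=
  sInf (ENNReal.ofReal '' {s : ℝ | 0 < s ∧ s • v - w ∈ C})

/-- The projective pseudo-metric `Θ(v,w) = log (B(v,w) / A(v,w)) ∈ [0, +∞]`. -/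
noncomputable def coneTheta {V : Type*} [NormedAddCommGroup V] [NormedSpace ℝ V]
    (C : Set V) (v w : V) : EReal :=
  ENNReal.log (coneB C v w / coneA C v w)


section BirkhoffAux

variable {V : Type*} [NormedAddCommGroup V] [NormedSpace ℝ V] {C : Set V}

/-- If a sequence in `C` tends to `-u` with `u ∈ C`, contradiction. -/
lemma IsClosedConvexCone.not_tendsto_neg (hC : IsClosedConvexCone C) {u : V} (hu : u ∈ C)
    {f : ℕ → V} (hf : ∀ n, f n ∈ C) (ht : Filter.Tendsto f Filter.atTop (nhds (-u))) : False := by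
  have hmem : -u ∈ closure C := mem_closure_of_tendsto ht (Filter.Eventually.of_forall hf)
  rcases hC.closed hmem with h | h
  · exact hC.neg_not_mem u hu h
  · simp only [Set.mem_singleton_iff, neg_eq_zero] at h
    exact hC.zero_not_mem (h ▸ hu)

lemma coneA_ne_top (hC : IsClosedConvexCone C) {v w : V} (hv : v ∈ C) :
    coneA C v w ≠ ⊤ := by
  intro htop
  have key : ∀ n : ℕ, ∃ t : ℝ, (0 < t ∧ w - t • v ∈ C) ∧ (n : ℝ) < t := by
    intro n
    have hlt : (n : ℝ≥0∞) < sSup (ENNReal.ofReal '' {t : ℝ | 0 < t ∧ w - t • v ∈ C}) := by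
      rw [show sSup (ENNReal.ofReal '' {t : ℝ | 0 < t ∧ w - t • v ∈ C}) = coneA C v w from rfl,
        htop]
      exact ENNReal.natCast_lt_top n
    rcases lt_sSup_iff.mp hlt with ⟨x, hx, hnx⟩
    rcases hx with ⟨t, ht, rfl⟩
    refine ⟨t, ht, ?_⟩
    rw [← ENNReal.ofReal_natCast, ENNReal.ofReal_lt_ofReal_iff ht.1] at hnx
    exact hnx
  choose t ht hnt using key
  have hmem : ∀ n, (1 / t n) • w - v ∈ C := by
    intro n
    have := hC.smul_mem _ (ht n).2 (1 / t n) (one_div_pos.mpr (ht n).1)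
    have h2 : (1 / t n) • (w - (t n) • v) = (1 / t n) • w - v := by
      rw [smul_sub, smul_smul]
      congr 1
      rw [one_div, inv_mul_cancel₀ (ht n).1.ne', one_smul]
    rwa [h2] at this
  have htend : Filter.Tendsto (fun n => (1 / t n) • w - v) Filter.atTop (nhds (-v)) := by
    have h0 : Filter.Tendsto (fun n => 1 / t n) Filter.atTop (nhds 0) := by
      apply squeeze_zero' (g := fun n : ℕ => 1 / (n : ℝ))
      · exact Filter.Eventually.of_forall fun n => (one_div_pos.mpr (ht n).1).le
      · filter_upwards [Filter.eventually_ge_atTop 1] with n hn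
        apply one_div_le_one_div_of_le
        · have : (1:ℝ) ≤ n := Nat.one_le_cast.mpr hn
          linarith
        · exact (hnt n).le
      · exact tendsto_one_div_atTop_nhds_zero_nat
    have := (h0.smul_const w).sub_const v
    simpa using this
  exact hC.not_tendsto_neg hv hmem htend

lemma coneB_ne_zero (hC : IsClosedConvexCone C) {v w : V} (hw : w ∈ C) :
    coneB C v w ≠ 0 := by
  intro hzero
  have key : ∀ n : ℕ, ∃ s : ℝ, (0 < s ∧ s • v - w ∈ C) ∧ s < 1 / (n + 1) := by
    intro n
    have hlt : sInf (ENNReal.ofReal '' {s : ℝ | 0 < s ∧ s • v - w ∈ C})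
        < ENNReal.ofReal (1 / (n + 1)) := by
      rw [show sInf (ENNReal.ofReal '' {s : ℝ | 0 < s ∧ s • v - w ∈ C}) = coneB C v w from rfl,
        hzero]
      exact ENNReal.ofReal_pos.mpr (by positivity)
    rcases sInf_lt_iff.mp hlt with ⟨x, hx, hxlt⟩
    rcases hx with ⟨s, hs, rfl⟩
    refine ⟨s, hs, ?_⟩
    rwa [ENNReal.ofReal_lt_ofReal_iff (by positivity)] at hxlt
  choose s hs hsn using key
  have hmem : ∀ n, (s n) • v - w ∈ C := fun n => (hs n).2
  have htend : Filter.Tendsto (fun n => (s n) • v - w) Filter.atTop (nhds (-w)) := by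
    have h0 : Filter.Tendsto s Filter.atTop (nhds 0) := by
      apply squeeze_zero (fun n => (hs n).1.le) (fun n => (hsn n).le)
      exact tendsto_one_div_add_atTop_nhds_zero_nat
    have := (h0.smul_const v).sub_const w
    simpa using this
  exact hC.not_tendsto_neg hw hmem htend

lemma cone_lt (hC : IsClosedConvexCone C) {v w : V} (hv : v ∈ C) {t s : ℝ}
    (ht : 0 < t ∧ w - t • v ∈ C) (hs : 0 < s ∧ s • v - w ∈ C) : t < s := by
  by_contra hle
  push_neg at hle
  have hsum := hC.add_mem _ ht.2 _ hs.2 1 1 one_pos one_pos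
  have heq : (1:ℝ) • (w - t • v) + (1:ℝ) • (s • v - w) = (s - t) • v := by
    simp only [one_smul, sub_smul]; abel
  rw [heq] at hsum
  rcases eq_or_lt_of_le hle with heq2 | hlt
  · rw [← heq2, sub_self, zero_smul] at hsum
    exact hC.zero_not_mem hsum
  · have hpos := hC.smul_mem v hv (t - s) (by linarith)
    have : (s - t) • v = -((t - s) • v) := by rw [← neg_smul]; ring_nf
    rw [this] at hsum
    exact hC.neg_not_mem _ hpos hsum

lemma coneA_le_coneB (hC : IsClosedConvexCone C) {v w : V} (hv : v ∈ C) :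
    coneA C v w ≤ coneB C v w := by
  apply sSup_le
  rintro x ⟨t, ht, rfl⟩
  apply le_sInf
  rintro y ⟨s, hs, rfl⟩
  exact ENNReal.ofReal_le_ofReal (cone_lt hC hv ht hs).le

lemma birk_hasDeriv {a b : ℝ} (ha : 0 < a) (hb : 0 < b) {x : ℝ} (hx0 : 0 < x) :
    HasDerivAt (fun x : ℝ => Real.log (x + a) - Real.log (x + b) - (1 - a / b) * Real.log x)
      (1 / (x + a) - 1 / (x + b) - (1 - a / b) * (1 / x)) x := by
  have hxa : 0 < x + a := by linarith
  have hxb : 0 < x + b := by linarith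
  have h1 : HasDerivAt (fun x : ℝ => Real.log (x + a)) (1 / (x + a)) x := by
    have := (Real.hasDerivAt_log hxa.ne').comp x ((hasDerivAt_id x).add_const a)
    simpa [one_div, Function.comp_def] using this
  have h2 : HasDerivAt (fun x : ℝ => Real.log (x + b)) (1 / (x + b)) x := by
    have := (Real.hasDerivAt_log hxb.ne').comp x ((hasDerivAt_id x).add_const b)
    simpa [one_div, Function.comp_def] using this
  have h3 : HasDerivAt (fun x : ℝ => (1 - a / b) * Real.log x) ((1 - a / b) * (1 / x)) x := by
    simpa [one_div] using (Real.hasDerivAt_log hx0.ne').const_mul (1 - a / b)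
  exact (h1.sub h2).sub h3

lemma birk_core_ineq {a b r : ℝ} (ha : 0 < a) (hab : a < b) (hr : 1 < r) :
    (r + a) * (1 + b) / ((1 + a) * (r + b)) ≤ r ^ (1 - a / b) := by
  have hb : 0 < b := lt_trans ha hab
  have hr0 : 0 < r := by linarith
  set g : ℝ → ℝ := fun x => Real.log (x + a) - Real.log (x + b) - (1 - a / b) * Real.log x with hg
  have hcont : ContinuousOn g (Set.Ici (1:ℝ)) := by
    apply ContinuousOn.sub
    apply ContinuousOn.sub
    · exact (Real.continuousOn_log.comp (continuous_id.add continuous_const).continuousOn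
        (fun x hx => by simp only [Set.mem_Ici] at hx; simp; intro h; nlinarith))
    · exact (Real.continuousOn_log.comp (continuous_id.add continuous_const).continuousOn
        (fun x hx => by simp only [Set.mem_Ici] at hx; simp; intro h; nlinarith))
    · exact continuousOn_const.mul (Real.continuousOn_log.mono
        (fun x hx => by simp only [Set.mem_Ici] at hx; simp; nlinarith))
  have hdiff : DifferentiableOn ℝ g (interior (Set.Ici (1:ℝ))) := by
    intro x hx
    rw [interior_Ici] at hx
    exact ((birk_hasDeriv ha hb (by simp only [Set.mem_Ioi] at hx; linarith)).differentiableAt).differentiableWithinAt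
  have hderiv : ∀ x ∈ interior (Set.Ici (1:ℝ)), deriv g x ≤ 0 := by
    intro x hx
    rw [interior_Ici] at hx
    have hx1 : (1:ℝ) < x := hx
    have hx0 : 0 < x := by linarith
    rw [(birk_hasDeriv ha hb hx0).deriv]
    have e1 : 1 / (x + a) - 1 / (x + b) = (b - a) / ((x + a) * (x + b)) := by
      rw [div_sub_div _ _ (by positivity) (by positivity)]; ring_nf
    have e2 : (1 - a / b) * (1 / x) = (b - a) / (b * x) := by
      field_simp
    have key : (b - a) / ((x + a) * (x + b)) ≤ (b - a) / (b * x) := by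
      apply div_le_div_of_nonneg_left (by linarith) (by positivity)
      nlinarith
    rw [e1, e2] at *
    linarith
  have hanti : AntitoneOn g (Set.Ici (1:ℝ)) :=
    antitoneOn_of_deriv_nonpos (convex_Ici 1) hcont hdiff hderiv
  have hgr : g r ≤ g 1 := hanti (Set.mem_Ici.mpr le_rfl) (Set.mem_Ici.mpr hr.le) hr.le
  have hra : 0 < r + a := by linarith
  have hrb : 0 < r + b := by linarith
  have h1a : 0 < 1 + a := by linarith
  have h1b : 0 < 1 + b := by linarith
  have hlog : Real.log ((r + a) * (1 + b) / ((1 + a) * (r + b))) ≤ (1 - a / b) * Real.log r := by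
    rw [Real.log_div (by positivity) (by positivity), Real.log_mul hra.ne' h1b.ne',
      Real.log_mul h1a.ne' hrb.ne']
    simp only [hg, Real.log_one] at hgr
    linarith
  calc (r + a) * (1 + b) / ((1 + a) * (r + b))
      = Real.exp (Real.log ((r + a) * (1 + b) / ((1 + a) * (r + b)))) := by
        rw [Real.exp_log (by positivity)]
    _ ≤ Real.exp ((1 - a / b) * Real.log r) := Real.exp_le_exp.mpr hlog
    _ = r ^ (1 - a / b) := by rw [Real.rpow_def_of_pos hr0]; ring_nf

set_option maxHeartbeats 1000000 in
open Filter in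
/-- Key estimate: for each admissible pair `(t, s)` for `(φ, ψ)` in `C₁`,
`B₂/A₂ ≤ (s/t)^(1 - exp (-Δ))`. -/
lemma birk_key {V₁ V₂ : Type*} [NormedAddCommGroup V₁] [NormedSpace ℝ V₁]
    [NormedAddCommGroup V₂] [NormedSpace ℝ V₂]
    {C₁ : Set V₁} {C₂ : Set V₂}
    (hC₁ : IsClosedConvexCone C₁) (hC₂ : IsClosedConvexCone C₂)
    (L : V₁ →ₗ[ℝ] V₂) (hmaps : ∀ v ∈ C₁, L v ∈ C₂)
    (Δ : ℝ) (hΔ0 : 0 ≤ Δ)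
    (hdiam : ∀ v ∈ C₁, ∀ w ∈ C₁, coneTheta C₂ (L v) (L w) ≤ (Δ : EReal))
    {φ ψ : V₁} (hφ : φ ∈ C₁) (hψ : ψ ∈ C₁) {t s : ℝ}
    (ht : 0 < t ∧ ψ - t • φ ∈ C₁) (hs : 0 < s ∧ s • φ - ψ ∈ C₁) :
    coneB C₂ (L φ) (L ψ) / coneA C₂ (L φ) (L ψ)
      ≤ ENNReal.ofReal ((s / t) ^ (1 - Real.exp (-Δ))) := by
  set c : ℝ := 1 - Real.exp (-Δ) with hc
  set x : V₁ := ψ - t • φ with hxdef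
  set y : V₁ := s • φ - ψ with hydef
  have hx : x ∈ C₁ := ht.2
  have hy : y ∈ C₁ := hs.2
  have hts : t < s := cone_lt hC₁ hφ ht hs
  set r : ℝ := s / t with hrdef
  have hr1 : 1 < r := (one_lt_div ht.1).mpr hts
  have hLx : L x ∈ C₂ := hmaps x hx
  have hLy : L y ∈ C₂ := hmaps y hy
  set A' : ℝ≥0∞ := coneA C₂ (L x) (L y) with hA'def
  set B' : ℝ≥0∞ := coneB C₂ (L x) (L y) with hB'def
  have hratio : B' / A' ≤ ENNReal.ofReal (Real.exp Δ) := by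
    have h1 := hdiam x hx y hy
    have h2 := EReal.exp_monotone h1
    rwa [coneTheta, ENNReal.exp_log, EReal.exp_coe] at h2
  have hB'0 : B' ≠ 0 := coneB_ne_zero hC₂ hLy
  have hA'top : A' ≠ ⊤ := coneA_ne_top hC₂ hLx
  have hA'0 : A' ≠ 0 := by
    intro h
    rw [h, ENNReal.div_zero hB'0] at hratio
    exact ENNReal.ofReal_ne_top (top_le_iff.mp hratio)
  have hB'top : B' ≠ ⊤ := by
    have := (ENNReal.div_le_iff hA'0 hA'top).mp hratio
    exact ne_top_of_le_ne_top (ENNReal.mul_ne_top ENNReal.ofReal_ne_top hA'top) this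
  set α' : ℝ := A'.toReal with hα'def
  set β' : ℝ := B'.toReal with hβ'def
  have hα'pos : 0 < α' := ENNReal.toReal_pos hA'0 hA'top
  have hβ'pos : 0 < β' := ENNReal.toReal_pos hB'0 hB'top
  clear_value x y r A' B' α' β'
  have hβα' : β' ≤ Real.exp Δ * α' := by
    rw [hα'def, hβ'def]
    have h1 := (ENNReal.div_le_iff hA'0 hA'top).mp hratio
    have h2 := ENNReal.toReal_mono (ENNReal.mul_ne_top ENNReal.ofReal_ne_top hA'top) h1
    rwa [ENNReal.toReal_mul, ENNReal.toReal_ofReal (Real.exp_nonneg Δ)] at h2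
  have hexpc : 1 - α' / β' ≤ c := by
    rw [hc]
    have hkey : Real.exp (-Δ) * β' ≤ α' := by
      have h := mul_le_mul_of_nonneg_left hβα' (Real.exp_nonneg (-Δ))
      have h2 : Real.exp (-Δ) * (Real.exp Δ * α') = α' := by
        rw [← mul_assoc, ← Real.exp_add]
        simp
      rw [h2] at h
      exact h
    have h5 : Real.exp (-Δ) ≤ α' / β' := (le_div_iff₀ hβ'pos).mpr hkey
    linarith
  -- choose approximating admissible pairs
  have hchoice : ∀ n : ℕ, ∃ a b : ℝ,
      (0 < a ∧ L y - a • L x ∈ C₂) ∧ (0 < b ∧ b • L x - L y ∈ C₂) ∧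
      α' - α' / (n + 2) < a ∧ b < β' + α' / (n + 2) := by
    intro n
    have hεpos : 0 < α' / (n + 2) := by positivity
    have hA'eq : A' = ENNReal.ofReal α' := by
      rw [hα'def]; exact (ENNReal.ofReal_toReal hA'top).symm
    have hB'eq : B' = ENNReal.ofReal β' := by
      rw [hβ'def]; exact (ENNReal.ofReal_toReal hB'top).symm
    have h1 : ENNReal.ofReal (α' - α' / (n + 2)) < A' := by
      rw [hA'eq, ENNReal.ofReal_lt_ofReal_iff hα'pos]
      linarith
    have h2 : B' < ENNReal.ofReal (β' + α' / (n + 2)) := by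
      rw [hB'eq, ENNReal.ofReal_lt_ofReal_iff (by linarith)]
      linarith
    rw [hA'def] at h1
    unfold coneA at h1
    rcases lt_sSup_iff.mp h1 with ⟨u, hu, h1'⟩
    rcases hu with ⟨a, ha, rfl⟩
    rw [hB'def] at h2
    unfold coneB at h2
    rcases sInf_lt_iff.mp h2 with ⟨w, hw, h2'⟩
    rcases hw with ⟨b, hb, rfl⟩
    refine ⟨a, b, ha, hb, ?_, ?_⟩
    · by_contra hcon
      push_neg at hcon
      exact absurd (ENNReal.ofReal_le_ofReal hcon) (not_le.mpr h1')
    · rwa [ENNReal.ofReal_lt_ofReal_iff (by linarith)] at h2'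
  choose a b hA hB haa hbb using hchoice
  have hbound : ∀ n : ℕ, coneB C₂ (L φ) (L ψ) / coneA C₂ (L φ) (L ψ)
      ≤ ENNReal.ofReal (r ^ (1 - (α' - α' / (n + 2)) / (β' + α' / (n + 2)))) := by
    intro n
    have han := hA n
    have hbn := hB n
    have hab : a n < b n := cone_lt hC₂ hLx han hbn
    have hant : (0:ℝ) < a n := han.1
    have hbnt : (0:ℝ) < b n := hbn.1
    have htp : (0:ℝ) < t := ht.1
    have hsp : (0:ℝ) < s := hs.1
    have h1an : (0:ℝ) < 1 + a n := by linarith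
    have h1bn : (0:ℝ) < 1 + b n := by linarith
    -- B₂ bound
    have hyax : y - a n • x = (s + a n * t) • φ - (1 + a n) • ψ := by
      rw [hxdef, hydef]; module
    have hmemB : ((s + a n * t) / (1 + a n)) • L φ - L ψ ∈ C₂ := by
      have hm := hC₂.smul_mem _ han.2 (1 / (1 + a n)) (one_div_pos.mpr h1an)
      have heq : (1 / (1 + a n)) • (L y - a n • L x)
          = ((s + a n * t) / (1 + a n)) • L φ - L ψ := by
        rw [← map_smul L, ← map_sub L, hyax, map_sub, map_smul, map_smul]
        match_scalars <;> field_simp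
      rwa [heq] at hm
    have hB2 : coneB C₂ (L φ) (L ψ) ≤ ENNReal.ofReal ((s + a n * t) / (1 + a n)) :=
      sInf_le ⟨_, ⟨div_pos (by nlinarith [mul_pos han.1 ht.1, hs.1]) h1an, hmemB⟩, rfl⟩
    -- A₂ bound
    have hybx : b n • x - y = (1 + b n) • ψ - (b n * t + s) • φ := by
      rw [hxdef, hydef]; module
    have hmemA : L ψ - ((b n * t + s) / (1 + b n)) • L φ ∈ C₂ := by
      have hm := hC₂.smul_mem _ hbn.2 (1 / (1 + b n)) (one_div_pos.mpr h1bn)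
      have heq : (1 / (1 + b n)) • (b n • L x - L y)
          = L ψ - ((b n * t + s) / (1 + b n)) • L φ := by
        rw [← map_smul L, ← map_sub L, hybx, map_sub, map_smul, map_smul]
        match_scalars <;> field_simp
      rwa [heq] at hm
    have hA2 : ENNReal.ofReal ((b n * t + s) / (1 + b n)) ≤ coneA C₂ (L φ) (L ψ) :=
      le_sSup ⟨_, ⟨div_pos (by nlinarith [mul_pos hbn.1 ht.1, hs.1]) h1bn, hmemA⟩, rfl⟩
    have hdiv : coneB C₂ (L φ) (L ψ) / coneA C₂ (L φ) (L ψ)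
        ≤ ENNReal.ofReal (((s + a n * t) / (1 + a n)) / ((b n * t + s) / (1 + b n))) := by
      rw [ENNReal.ofReal_div_of_pos (by positivity)]
      exact ENNReal.div_le_div hB2 hA2
    have hreal : ((s + a n * t) / (1 + a n)) / ((b n * t + s) / (1 + b n))
        = (r + a n) * (1 + b n) / ((1 + a n) * (r + b n)) := by
      have htne : t ≠ 0 := ht.1.ne'
      have h3 : (0:ℝ) < b n * t + s := by nlinarith [mul_pos hbn.1 ht.1, hs.1]
      have h4 : (0:ℝ) < s / t + b n := by positivity
      rw [hrdef, div_div_div_comm, div_eq_div_iff (by positivity) (by positivity)]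
      field_simp
      ring
    have hcore : (r + a n) * (1 + b n) / ((1 + a n) * (r + b n)) ≤ r ^ (1 - a n / b n) :=
      birk_core_ineq han.1 hab hr1
    have hexp : r ^ (1 - a n / b n) ≤ r ^ (1 - (α' - α' / (n + 2)) / (β' + α' / (n + 2))) := by
      apply Real.rpow_le_rpow_of_exponent_le hr1.le
      have hεlt : α' / (n + 2) < α' := by
        rw [div_lt_iff₀ (by positivity)]
        nlinarith [hα'pos, (Nat.cast_nonneg n : (0:ℝ) ≤ n)]
      have h5 : (α' - α' / (n + 2)) / (β' + α' / (n + 2)) ≤ a n / b n := by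
        apply div_le_div₀ (le_of_lt han.1) (haa n).le hbn.1 (hbb n).le
      linarith
    calc coneB C₂ (L φ) (L ψ) / coneA C₂ (L φ) (L ψ)
        ≤ ENNReal.ofReal (((s + a n * t) / (1 + a n)) / ((b n * t + s) / (1 + b n))) := hdiv
      _ ≤ ENNReal.ofReal (r ^ (1 - (α' - α' / (n + 2)) / (β' + α' / (n + 2)))) := by
          apply ENNReal.ofReal_le_ofReal
          rw [hreal]
          exact le_trans hcore hexp
  -- pass to the limit n → ∞
  have hεtend : Tendsto (fun n : ℕ => α' / ((n : ℝ) + 2)) atTop (nhds 0) := by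
    have h1 : Tendsto (fun n : ℕ => ((n : ℝ) + 2)) atTop atTop :=
      tendsto_atTop_add_const_right _ 2 tendsto_natCast_atTop_atTop
    have h2 := h1.inv_tendsto_atTop
    have := h2.const_mul α'
    simpa [div_eq_mul_inv, mul_zero] using this
  have hrpos : (0:ℝ) < r := by linarith
  have t1 : Tendsto (fun n : ℕ => 1 - (α' - α' / ((n:ℝ) + 2)) / (β' + α' / ((n:ℝ) + 2)))
      atTop (nhds (1 - α' / β')) := by
    have hd : Tendsto (fun n : ℕ => (α' - α' / ((n:ℝ) + 2)) / (β' + α' / ((n:ℝ) + 2)))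
        atTop (nhds ((α' - 0) / (β' + 0))) :=
      Filter.Tendsto.div (tendsto_const_nhds.sub hεtend) (tendsto_const_nhds.add hεtend)
        (by simpa using hβ'pos.ne')
    have := Filter.Tendsto.const_sub (1:ℝ) hd
    simpa using this
  have t2 : Tendsto
      (fun n : ℕ => r ^ (1 - (α' - α' / ((n:ℝ) + 2)) / (β' + α' / ((n:ℝ) + 2))))
      atTop (nhds (r ^ (1 - α' / β'))) := by
    have h2 : ContinuousAt (fun e : ℝ => r ^ e) (1 - α' / β') :=
      Real.continuousAt_const_rpow hrpos.ne'
    exact h2.tendsto.comp t1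
  have htendF : Tendsto
      (fun n : ℕ => ENNReal.ofReal (r ^ (1 - (α' - α' / ((n:ℝ) + 2)) / (β' + α' / ((n:ℝ) + 2)))))
      atTop (nhds (ENNReal.ofReal (r ^ (1 - α' / β')))) :=
    (ENNReal.continuous_ofReal.tendsto _).comp t2
  have hfinal : coneB C₂ (L φ) (L ψ) / coneA C₂ (L φ) (L ψ)
      ≤ ENNReal.ofReal (r ^ (1 - α' / β')) :=
    ge_of_tendsto' htendF hbound
  refine le_trans hfinal (ENNReal.ofReal_le_ofReal ?_)
  exact Real.rpow_le_rpow_of_exponent_le hr1.le hexpc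

end BirkhoffAux

open Filter in
set_option maxHeartbeats 1000000 in
/-- Birkhoff's contraction theorem: if `L` is linear, maps the closed convex cone `C₁`
into the closed convex cone `C₂`, and `L(C₁)` has finite `Θ₂`-diameter `Δ`, then
`Θ₂(Lφ, Lψ) ≤ (1 - e^{-Δ}) Θ₁(φ, ψ)` for all `φ, ψ ∈ C₁`. -/
theorem stmt_6 {V₁ V₂ : Type*} [NormedAddCommGroup V₁] [NormedSpace ℝ V₁]
    [NormedAddCommGroup V₂] [NormedSpace ℝ V₂]
    (C₁ : Set V₁) (C₂ : Set V₂)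
    (hC₁ : IsClosedConvexCone C₁) (hC₂ : IsClosedConvexCone C₂)
    (L : V₁ →ₗ[ℝ] V₂) (hmaps : ∀ v ∈ C₁, L v ∈ C₂)
    (Δ : ℝ) (hΔ0 : 0 ≤ Δ)
    (hdiam : ∀ v ∈ C₁, ∀ w ∈ C₁, coneTheta C₂ (L v) (L w) ≤ (Δ : EReal)) :
    ∀ φ ∈ C₁, ∀ ψ ∈ C₁,
      coneTheta C₂ (L φ) (L ψ) ≤ ((1 - Real.exp (-Δ) : ℝ) : EReal) * coneTheta C₁ φ ψ := by
  intro φ hφ ψ hψ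
  have hc0 : 0 ≤ 1 - Real.exp (-Δ) := by
    have := Real.exp_le_one_iff.mpr (neg_nonpos.mpr hΔ0)
    linarith
  by_cases hT : coneTheta C₁ φ ψ = ⊤
  · rw [hT]
    rcases eq_or_lt_of_le hΔ0 with hΔ | hΔ
    · rw [← hΔ]
      norm_num
      have h := hdiam φ hφ ψ hψ
      rw [← hΔ] at h
      simpa using h
    · have hcpos : (0:ℝ) < 1 - Real.exp (-Δ) := by
        have := Real.exp_lt_one_iff.mpr (neg_lt_zero.mpr hΔ)
        linarith
      rw [EReal.coe_mul_top_of_pos hcpos]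
      exact le_top
  · set c : ℝ := 1 - Real.exp (-Δ) with hc
    set A1 : ℝ≥0∞ := coneA C₁ φ ψ with hA1def
    set B1 : ℝ≥0∞ := coneB C₁ φ ψ with hB1def
    have hB10 : B1 ≠ 0 := coneB_ne_zero hC₁ hψ
    have hA1top : A1 ≠ ⊤ := coneA_ne_top hC₁ hφ
    have hne : B1 / A1 ≠ ⊤ := fun h => hT (by rw [coneTheta, ← hA1def, ← hB1def, h]; rfl)
    have hA10 : A1 ≠ 0 := fun h => hne (by rw [h, ENNReal.div_zero hB10])
    have hB1top : B1 ≠ ⊤ := fun h => hne (by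
      rw [h, ENNReal.top_div_of_lt_top (lt_top_iff_ne_top.mpr hA1top)])
    set α : ℝ := A1.toReal with hαdef
    set β : ℝ := B1.toReal with hβdef
    have hαpos : 0 < α := ENNReal.toReal_pos hA10 hA1top
    have hβpos : 0 < β := ENNReal.toReal_pos hB10 hB1top
    clear_value A1 B1 α β
    have hchoice : ∀ n : ℕ, ∃ t s : ℝ,
        (0 < t ∧ ψ - t • φ ∈ C₁) ∧ (0 < s ∧ s • φ - ψ ∈ C₁) ∧
        α - α / (n + 2) < t ∧ s < β + α / (n + 2) := by
      intro n
      have hεpos : 0 < α / ((n:ℝ) + 2) := by positivity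
      have hA1eq : A1 = ENNReal.ofReal α := by
        rw [hαdef]; exact (ENNReal.ofReal_toReal hA1top).symm
      have hB1eq : B1 = ENNReal.ofReal β := by
        rw [hβdef]; exact (ENNReal.ofReal_toReal hB1top).symm
      have h1 : ENNReal.ofReal (α - α / (n + 2)) < A1 := by
        rw [hA1eq, ENNReal.ofReal_lt_ofReal_iff hαpos]
        linarith
      have h2 : B1 < ENNReal.ofReal (β + α / (n + 2)) := by
        rw [hB1eq, ENNReal.ofReal_lt_ofReal_iff (by linarith)]
        linarith
      rw [hA1def] at h1
      unfold coneA at h1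
      rcases lt_sSup_iff.mp h1 with ⟨u, hu, h1'⟩
      rcases hu with ⟨t, htm, rfl⟩
      rw [hB1def] at h2
      unfold coneB at h2
      rcases sInf_lt_iff.mp h2 with ⟨w, hw, h2'⟩
      rcases hw with ⟨s, hsm, rfl⟩
      refine ⟨t, s, htm, hsm, ?_, ?_⟩
      · by_contra hcon
        push_neg at hcon
        exact absurd (ENNReal.ofReal_le_ofReal hcon) (not_le.mpr h1')
      · rwa [ENNReal.ofReal_lt_ofReal_iff (by linarith)] at h2'
    choose tt ss hTm hSm htt hss using hchoice
    have hbound : ∀ n : ℕ, coneB C₂ (L φ) (L ψ) / coneA C₂ (L φ) (L ψ)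
        ≤ ENNReal.ofReal (((β + α / ((n:ℝ) + 2)) / (α - α / ((n:ℝ) + 2))) ^ c) := by
      intro n
      have h1 := birk_key hC₁ hC₂ L hmaps Δ hΔ0 hdiam hφ hψ (hTm n) (hSm n)
      refine le_trans h1 (ENNReal.ofReal_le_ofReal ?_)
      have hεlt : α / ((n:ℝ) + 2) < α := by
        rw [div_lt_iff₀ (by positivity)]
        nlinarith [hαpos, (Nat.cast_nonneg n : (0:ℝ) ≤ n)]
      have hα2 : (0:ℝ) < α - α / ((n:ℝ) + 2) := by linarith
      have hεpos : (0:ℝ) < α / ((n:ℝ) + 2) := by positivity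
      apply Real.rpow_le_rpow (div_nonneg (hSm n).1.le (hTm n).1.le) ?_ hc0
      exact div_le_div₀ (by linarith) (hss n).le hα2 (htt n).le
    have hεtend : Tendsto (fun n : ℕ => α / ((n : ℝ) + 2)) atTop (nhds 0) := by
      have h1 : Tendsto (fun n : ℕ => ((n : ℝ) + 2)) atTop atTop :=
        tendsto_atTop_add_const_right _ 2 tendsto_natCast_atTop_atTop
      have h2 := h1.inv_tendsto_atTop
      have := h2.const_mul α
      simpa [div_eq_mul_inv, mul_zero] using this
    have t1 : Tendsto (fun n : ℕ => (β + α / ((n:ℝ) + 2)) / (α - α / ((n:ℝ) + 2)))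
        atTop (nhds ((β + 0) / (α - 0))) :=
      Filter.Tendsto.div (tendsto_const_nhds.add hεtend) (tendsto_const_nhds.sub hεtend)
        (by simpa using hαpos.ne')
    have t2 : Tendsto (fun n : ℕ => ((β + α / ((n:ℝ) + 2)) / (α - α / ((n:ℝ) + 2))) ^ c)
        atTop (nhds ((β / α) ^ c)) := by
      have hcont : ContinuousAt (fun z : ℝ => z ^ c) (β / α) :=
        Real.continuousAt_rpow_const _ _ (Or.inr hc0)
      have t1' : Tendsto (fun n : ℕ => (β + α / ((n:ℝ) + 2)) / (α - α / ((n:ℝ) + 2)))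
          atTop (nhds (β / α)) := by simpa using t1
      exact hcont.tendsto.comp t1'
    have htendF : Tendsto
        (fun n : ℕ => ENNReal.ofReal (((β + α / ((n:ℝ) + 2)) / (α - α / ((n:ℝ) + 2))) ^ c))
        atTop (nhds (ENNReal.ofReal ((β / α) ^ c))) :=
      (ENNReal.continuous_ofReal.tendsto _).comp t2
    have hfin : coneB C₂ (L φ) (L ψ) / coneA C₂ (L φ) (L ψ)
        ≤ ENNReal.ofReal ((β / α) ^ c) := ge_of_tendsto' htendF hbound
    have heq : ENNReal.ofReal ((β / α) ^ c) = (B1 / A1) ^ c := by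
      rw [← ENNReal.ofReal_rpow_of_pos (div_pos hβpos hαpos)]
      congr 1
      rw [ENNReal.ofReal_div_of_pos hαpos, hαdef, hβdef,
        ENNReal.ofReal_toReal hB1top, ENNReal.ofReal_toReal hA1top]
    rw [heq] at hfin
    calc coneTheta C₂ (L φ) (L ψ) ≤ ENNReal.log ((B1 / A1) ^ c) := by
          rw [coneTheta]
          exact ENNReal.log_monotone hfin
      _ = (c : EReal) * ENNReal.log (B1 / A1) := by rw [ENNReal.log_rpow]
      _ = (c : EReal) * coneTheta C₁ φ ψ := by rw [coneTheta, ← hA1def, ← hB1def]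
end

section
/- Let f: M → M be a topologically exact local homeomorphism of a compact metric space (for every open U there is n with f^n(U) = M), φ continuous, and let ν be a Borel probability measure satisfying L*ν = λν for the transfer operator L(ψ)(x) = Σ_{f(y)=x} e^{φ(y)} ψ(y) with λ > 0. Then ν gives positive measure to every nonempty open set; in particular supp(ν) = M. -/
open MeasureTheory Finset
open scoped ENNReal

/-- Continuity of the transfer-operator-type sum `x ↦ ∑ y ∈ f⁻¹(x), h y` for a local
homeomorphism `f` of a compact metric space with finite fibers. -/
lemma transfer_continuous {M : Type*} [MetricSpace M] [CompactSpace M]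
    (f : M → M) (hf : IsLocalHomeomorph f)
    (pre : M → Finset M) (hpre : ∀ x y : M, y ∈ pre x ↔ f y = x)
    (h : M → ℝ) (hh : Continuous h) :
    Continuous (fun x => ∑ y ∈ pre x, h y) := by
  classical
  have hfc : Continuous f := hf.continuous
  rw [continuous_iff_continuousAt]
  intro x₀
  -- choose local homeomorphisms
  choose e hmem hfe using hf
  -- pairwise disjoint neighborhoods of the fiber over x₀
  obtain ⟨Usep, hUsep, hdisj⟩ := (Set.finite_coe_iff.mp (Finset.finite_toSet (pre x₀))).t2_separation
  set W : M → Set M := fun y => (e y).source ∩ Usep y with hW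
  have hWopen : ∀ y, IsOpen (W y) := fun y => (e y).open_source.inter (hUsep y).2
  have hWmem : ∀ y, y ∈ W y := fun y => ⟨hmem y, (hUsep y).1⟩
  have hWsub : ∀ y, W y ⊆ (e y).source := fun y => Set.inter_subset_left
  have hfeq : ∀ y z, f z = e y z := fun y z => by rw [hfe y]
  -- N : all local inverses defined
  set N : Set M := ⋂ y ∈ pre x₀, (e y) '' (W y) with hN
  have hNopen : IsOpen N := isOpen_biInter_finset fun y _ =>
    (e y).isOpen_image_of_subset_source (hWopen y) (hWsub y)
  have hNmem : x₀ ∈ N := by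
    refine Set.mem_biInter fun y hy => ⟨y, hWmem y, ?_⟩
    rw [← hfeq y y, (hpre x₀ y).mp hy]
  -- N' : all preimages of nearby points lie in the union of the W y
  set K : Set M := (⋃ y ∈ pre x₀, W y)ᶜ with hK
  have hKclosed : IsClosed K := (isOpen_biUnion fun y _ => hWopen y).isClosed_compl
  set N' : Set M := (f '' K)ᶜ with hN'
  have hN'open : IsOpen N' := (hKclosed.isCompact.image hfc).isClosed.isOpen_compl
  have hN'mem : x₀ ∈ N' := by
    intro hx
    obtain ⟨z, hzK, hz⟩ := hx
    have hz0 : z ∈ pre x₀ := (hpre x₀ z).mpr hz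
    exact hzK (Set.mem_biUnion hz0 (hWmem z))
  -- on N ∩ N' the sum equals a continuous function
  have key : ∀ x ∈ N ∩ N', ∑ y ∈ pre x, h y = ∑ y ∈ pre x₀, h ((e y).symm x) := by
    intro x ⟨hxN, hxN'⟩
    have himg : pre x = (pre x₀).image (fun y => (e y).symm x) := by
      ext z
      simp only [Finset.mem_image]
      constructor
      · intro hz
        have hzx : f z = x := (hpre x z).mp hz
        have hzW : z ∈ ⋃ y ∈ pre x₀, W y := by
          by_contra hc
          exact hxN' ⟨z, hc, hzx⟩
        obtain ⟨y, hy, hzWy⟩ := Set.mem_iUnion₂.mp hzW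
        refine ⟨y, hy, ?_⟩
        have : (e y) z = x := by rw [← hfeq y z, hzx]
        rw [← this, (e y).left_inv (hWsub y hzWy)]
      · rintro ⟨y, hy, rfl⟩
        obtain ⟨w, hw, hwx⟩ := Set.mem_iInter₂.mp hxN y hy
        have hsymm : (e y).symm x = w := by rw [← hwx, (e y).left_inv (hWsub y hw)]
        rw [hpre, hsymm, hfeq y w, hwx]
    rw [himg]
    refine Finset.sum_image ?_
    intro y hy y' hy' heq
    by_contra hne
    obtain ⟨w, hw, hwx⟩ := Set.mem_iInter₂.mp hxN y hy
    obtain ⟨w', hw', hwx'⟩ := Set.mem_iInter₂.mp hxN y' hy'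
    have h1 : (e y).symm x = w := by rw [← hwx, (e y).left_inv (hWsub y hw)]
    have h2 : (e y').symm x = w' := by rw [← hwx', (e y').left_inv (hWsub y' hw')]
    have hww' : w = w' := by rw [← h1, (show (e y).symm x = (e y').symm x from heq), h2]
    exact Set.disjoint_left.mp (hdisj hy hy' hne)
      ((hW ▸ hw).2) (hww' ▸ (hW ▸ hw').2)
  -- continuity of the model function at x₀
  have hcont : ContinuousAt (fun x => ∑ y ∈ pre x₀, h ((e y).symm x)) x₀ := by
    refine tendsto_finset_sum _ fun y hy => ?_
    refine (hh.continuousAt.comp ((e y).continuousAt_symm ?_) : _)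
    obtain ⟨w, hw, hwx⟩ := Set.mem_iInter₂.mp hNmem y hy
    rw [← hwx]
    exact (e y).map_source (hWsub y hw)
  refine hcont.congr ?_
  filter_upwards [(hNopen.inter hN'open).mem_nhds ⟨hNmem, hN'mem⟩] with x hx
  exact (key x hx).symm

/-- If `f` is a topologically exact local homeomorphism of a compact metric space with
finitely many preimages at every point, `φ` is continuous, and `ν` is a Borel
probability with `L*ν = λ ν` (`λ > 0`), then `ν` gives positive measure to every
nonempty open set. -/
theorem stmt_10 {M : Type*} [MetricSpace M] [CompactSpace M] [MeasurableSpace M]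
    [BorelSpace M]
    (f : M → M) (hf : IsLocalHomeomorph f)
    (hexact : ∀ U : Set M, IsOpen U → U.Nonempty → ∃ n : ℕ, f^[n] '' U = Set.univ)
    (φ : M → ℝ) (hφ : Continuous φ)
    (pre : M → Finset M) (hpre : ∀ x y : M, y ∈ pre x ↔ f y = x)
    (lam : ℝ) (hlam : 0 < lam)
    (ν : Measure M) [IsProbabilityMeasure ν]
    (hdual : ∀ ψ : M → ℝ, Continuous ψ →
      ∫ x, (∑ y ∈ pre x, Real.exp (φ y) * ψ y) ∂ν = lam * ∫ x, ψ x ∂ν) :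
    ∀ U : Set M, IsOpen U → U.Nonempty → 0 < ν U := by
  intro U hU ⟨x₀, hx₀⟩
  by_contra hc
  have hν0 : ν U = 0 := by
    simpa using (not_lt.mp hc)
  -- a closed ball inside U
  obtain ⟨ε, hε, hball⟩ := Metric.isOpen_iff.mp hU x₀ hx₀
  have hclosed : Metric.closedBall x₀ (ε / 2) ⊆ U :=
    (Metric.closedBall_subset_ball (by linarith)).trans hball
  set V : Set M := Metric.ball x₀ (ε / 2) with hV
  have hVsub : V ⊆ Metric.closedBall x₀ (ε / 2) := Metric.ball_subset_closedBall
  obtain ⟨n, hn⟩ := hexact V Metric.isOpen_ball ⟨x₀, Metric.mem_ball_self (by linarith)⟩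
  -- Urysohn function : 1 on the closed ball, 0 off U
  obtain ⟨g, hg0, hg1, hg01⟩ :=
    exists_continuous_zero_one_of_isCompact
      (isCompact_closedBall x₀ (ε / 2)) hU.isClosed_compl
      (Set.disjoint_left.mpr fun x hx hx' => hx' (hclosed hx))
  set ψ₀ : M → ℝ := fun x => 1 - g x with hψ₀
  have hψ₀cont : Continuous ψ₀ := continuous_const.sub g.continuous
  have hψ₀nonneg : ∀ x, 0 ≤ ψ₀ x := fun x => by
    have := (hg01 x).2; simp [hψ₀]; linarith
  have hψ₀one : ∀ x ∈ V, ψ₀ x = 1 := fun x hx => by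
    simp [hψ₀, hg0 (hVsub hx)]
  have hψ₀zero : ∀ x ∉ U, ψ₀ x = 0 := fun x hx => by
    simp [hψ₀, hg1 (show x ∈ Uᶜ from hx)]
  -- ∫ ψ₀ = 0
  have hint0 : ∫ x, ψ₀ x ∂ν = 0 := by
    have hae : ψ₀ =ᵐ[ν] 0 := by
      refine measure_mono_null (fun x hx => ?_) hν0
      simp only [Set.mem_setOf_eq, Pi.zero_apply] at hx
      by_contra hxU
      exact hx (hψ₀zero x hxU)
    rw [integral_congr_ae hae]; simp
  -- the transfer operator
  set L : (M → ℝ) → (M → ℝ) := fun ψ x => ∑ y ∈ pre x, Real.exp (φ y) * ψ y with hL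
  have hLcont : ∀ ψ : M → ℝ, Continuous ψ → Continuous (L ψ) := fun ψ hψ =>
    transfer_continuous f hf pre hpre (fun y => Real.exp (φ y) * ψ y)
      ((Real.continuous_exp.comp hφ).mul hψ)
  have hcontn : ∀ k : ℕ, Continuous (L^[k] ψ₀) := by
    intro k
    induction k with
    | zero => exact hψ₀cont
    | succ k ih => rw [Function.iterate_succ_apply']; exact hLcont _ ih
  have hnonneg : ∀ k : ℕ, ∀ x, 0 ≤ L^[k] ψ₀ x := by
    intro k
    induction k with
    | zero => exact hψ₀nonneg
    | succ k ih =>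
      intro x
      rw [Function.iterate_succ_apply']
      exact Finset.sum_nonneg fun y _ => mul_nonneg (Real.exp_pos _).le (ih y)
  have hintn : ∀ k : ℕ, ∫ x, L^[k] ψ₀ x ∂ν = lam ^ k * ∫ x, ψ₀ x ∂ν := by
    intro k
    induction k with
    | zero => simp
    | succ k ih =>
      have := hdual (L^[k] ψ₀) (hcontn k)
      rw [Function.iterate_succ_apply']
      calc ∫ x, L (L^[k] ψ₀) x ∂ν = lam * ∫ x, L^[k] ψ₀ x ∂ν := this
        _ = lam ^ (k + 1) * ∫ x, ψ₀ x ∂ν := by rw [ih]; ring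
  -- lower bound along orbits
  have : Nonempty M := ⟨x₀⟩
  obtain ⟨w₀, -, hw₀⟩ := isCompact_univ.exists_isMinOn
    (Set.univ_nonempty) hφ.continuousOn
  set b : ℝ := Real.exp (φ w₀) with hb
  have hbpos : 0 < b := Real.exp_pos _
  have hlow : ∀ k : ℕ, ∀ z, b ^ k * ψ₀ z ≤ L^[k] ψ₀ (f^[k] z) := by
    intro k
    induction k with
    | zero => intro z; simp
    | succ k ih =>
      intro z
      rw [Function.iterate_succ_apply' L, Function.iterate_succ_apply' f]
      have hmem : f^[k] z ∈ pre (f (f^[k] z)) := (hpre _ _).mpr rfl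
      have hterm : Real.exp (φ (f^[k] z)) * L^[k] ψ₀ (f^[k] z) ≤
          L (L^[k] ψ₀) (f (f^[k] z)) :=
        Finset.single_le_sum (f := fun y => Real.exp (φ y) * L^[k] ψ₀ y)
          (fun y _ => mul_nonneg (Real.exp_pos _).le (hnonneg k y)) hmem
      have hb' : b ≤ Real.exp (φ (f^[k] z)) :=
        Real.exp_le_exp.mpr (hw₀ (Set.mem_univ _))
      calc b ^ (k + 1) * ψ₀ z = b * (b ^ k * ψ₀ z) := by ring
        _ ≤ b * L^[k] ψ₀ (f^[k] z) := by
            exact mul_le_mul_of_nonneg_left (ih z) hbpos.le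
        _ ≤ Real.exp (φ (f^[k] z)) * L^[k] ψ₀ (f^[k] z) :=
            mul_le_mul_of_nonneg_right hb' (hnonneg k _)
        _ ≤ _ := hterm
  -- everywhere lower bound b^n for L^[n] ψ₀
  have hglobal : ∀ x, b ^ n ≤ L^[n] ψ₀ x := by
    intro x
    have hx : x ∈ f^[n] '' V := by rw [hn]; trivial
    obtain ⟨z, hz, rfl⟩ := hx
    have := hlow n z
    rwa [hψ₀one z hz, mul_one] at this
  -- integrate and contradict
  have hInt : Integrable (L^[n] ψ₀) ν :=
    (hcontn n).integrable_of_hasCompactSupport (isClosed_tsupport _).isCompact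
  have hle : (b : ℝ) ^ n ≤ ∫ x, L^[n] ψ₀ x ∂ν := by
    have h1 : ∫ (_ : M), (b ^ n) ∂ν = b ^ n := by simp
    calc (b : ℝ) ^ n = ∫ (_ : M), (b ^ n) ∂ν := h1.symm
      _ ≤ ∫ x, L^[n] ψ₀ x ∂ν := by
          refine integral_mono_of_nonneg ?_ hInt ?_
          · exact Filter.Eventually.of_forall fun x => pow_nonneg hbpos.le n
          · exact Filter.Eventually.of_forall hglobal
  rw [hintn n, hint0, mul_zero] at hle
  exact absurd hle (not_le.mpr (pow_pos hbpos n))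
end

section
/- Let L_j: M → (0,∞), j ≥ 0, be functions, c > 0, and x ∈ M a point such that limsup_{n→∞} (1/n) Σ_{j=0}^{n−1} log L_j(x_j)^{−1} ≤ −2c < 0, where x_j denotes the orbit. Then x has infinitely many c-hyperbolic times, i.e. there are infinitely many n ∈ ℕ such that Π_{j=n−k}^{n−1} L_j(x_j)^{−1} ≤ e^{−ck} for every 1 ≤ k ≤ n. -/
open Finset Filter

/-- (Pliss-type lemma.) If along the orbit `(x_j)` the averages satisfy
`limsup (1/n) Σ_{j<n} log L_j(x_j)⁻¹ ≤ -2c < 0` (with `log L_j(x_j)⁻¹` uniformly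
bounded below), then there are infinitely many `c`-hyperbolic times `n`, i.e. `n` with
`Π_{j=n-k}^{n-1} L_j(x_j)⁻¹ ≤ e^{-ck}` for every `1 ≤ k ≤ n`. -/
theorem stmt_14 {M : Type*} (L : ℕ → M → ℝ) (x : ℕ → M)
    (hLpos : ∀ j, 0 < L j (x j)) (c : ℝ) (hc : 0 < c)
    (A : ℝ) (hbd : ∀ j, -A ≤ Real.log ((L j (x j))⁻¹))
    (hlimsup : Filter.limsup (fun n : ℕ =>
        (1 / (n : ℝ)) * ∑ j ∈ Finset.range n, Real.log ((L j (x j))⁻¹))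
      Filter.atTop ≤ -2 * c) :
    {n : ℕ | ∀ k : ℕ, 1 ≤ k → k ≤ n →
      ∏ j ∈ Finset.Ico (n - k) n, (L j (x j))⁻¹ ≤ Real.exp (-c * k)}.Infinite := by
  classical
  set a : ℕ → ℝ := fun j => Real.log ((L j (x j))⁻¹) with ha
  set u : ℕ → ℝ := fun n => (1 / (n : ℝ)) * ∑ j ∈ Finset.range n, a j with hu
  set b : ℕ → ℝ := fun n => (∑ j ∈ Finset.range n, a j) + c * n with hbdef
  -- Step 1: eventually u n ≤ -(3*c/2)
  have hev : ∀ᶠ n : ℕ in atTop, u n ≤ -(3 * c / 2) := by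
    rw [Filter.limsup_eq] at hlimsup
    set S : Set ℝ := {t | ∀ᶠ n : ℕ in atTop, u n ≤ t} with hS
    by_contra hcon
    have hlb : ∀ t ∈ S, -(3 * c / 2) ≤ t := by
      intro t ht
      by_contra hlt
      push_neg at hlt
      exact hcon (ht.mono fun n hn => hn.trans hlt.le)
    rcases Set.eq_empty_or_nonempty S with hSe | hSn
    · rw [hSe] at hlimsup
      simp [Real.sInf_empty] at hlimsup
      linarith
    · have := le_csInf hSn hlb
      linarith [hlimsup, this]
  -- Step 2: b tends to -∞
  have hbtend : Tendsto b atTop atBot := by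
    have hcomp : Tendsto (fun n : ℕ => -(c / 2) * (n : ℝ)) atTop atBot := by
      apply Tendsto.const_mul_atTop_of_neg (by linarith : -(c/2) < 0)
      exact tendsto_natCast_atTop_atTop
    apply tendsto_atBot_mono' atTop _ hcomp
    filter_upwards [hev, Filter.eventually_ge_atTop 1] with n hn hn1
    have hnpos : (0 : ℝ) < (n : ℝ) := by exact_mod_cast hn1
    have hsum : ∑ j ∈ Finset.range n, a j ≤ -(3 * c / 2) * n := by
      have : (∑ j ∈ Finset.range n, a j) = (n : ℝ) * u n := by
        rw [hu]; field_simp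
      rw [this]
      calc (n : ℝ) * u n ≤ (n : ℝ) * (-(3 * c / 2)) :=
            mul_le_mul_of_nonneg_left hn hnpos.le
        _ = -(3 * c / 2) * n := by ring
    simp only [hbdef]
    nlinarith
  -- The set of record minima
  set H : Set ℕ := {n | ∀ m : ℕ, m ≤ n → b n ≤ b m} with hH
  -- Step 3: H is contained in the target set
  have hsub : H ⊆ {n : ℕ | ∀ k : ℕ, 1 ≤ k → k ≤ n →
      ∏ j ∈ Finset.Ico (n - k) n, (L j (x j))⁻¹ ≤ Real.exp (-c * k)} := by
    intro n hn k hk1 hkn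
    have hmono : b n ≤ b (n - k) := hn (n - k) (Nat.sub_le n k)
    have hsplit : (∑ j ∈ Finset.range (n - k), a j) + ∑ j ∈ Finset.Ico (n - k) n, a j
        = ∑ j ∈ Finset.range n, a j := by
      simp only [Finset.range_eq_Ico]
      exact Finset.sum_Ico_consecutive _ (Nat.zero_le _) (Nat.sub_le n k)
    have hcast : ((n - k : ℕ) : ℝ) = (n : ℝ) - (k : ℝ) := by
      exact Nat.cast_sub hkn
    have hsumIco : ∑ j ∈ Finset.Ico (n - k) n, a j ≤ -c * k := by
      simp only [hbdef] at hmono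
      rw [hcast] at hmono
      nlinarith [hsplit]
    have hprod : ∏ j ∈ Finset.Ico (n - k) n, (L j (x j))⁻¹
        = Real.exp (∑ j ∈ Finset.Ico (n - k) n, a j) := by
      rw [Real.exp_sum]
      apply Finset.prod_congr rfl
      intro j _
      rw [ha]
      exact (Real.exp_log (inv_pos.mpr (hLpos j))).symm
    rw [hprod]
    exact Real.exp_le_exp.mpr hsumIco
  -- Step 4: H is infinite
  apply Set.Infinite.mono hsub
  apply Set.infinite_of_forall_exists_gt
  intro N
  obtain ⟨m0, hm0mem, hm0min⟩ := Finset.exists_min_image (Finset.range (N + 1)) b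
    ⟨0, Finset.mem_range.mpr (Nat.succ_pos N)⟩
  have hTne : ∃ n : ℕ, b n < b m0 := by
    have := (hbtend.eventually (Filter.eventually_lt_atBot (b m0))).exists
    exact this
  set n := Nat.find hTne with hndef
  have hnspec : b n < b m0 := Nat.find_spec hTne
  have hnmin : ∀ m < n, b m0 ≤ b m := fun m hm => not_lt.mp (Nat.find_min hTne hm)
  refine ⟨n, ?_, ?_⟩
  · -- n ∈ H
    intro m hm
    rcases eq_or_lt_of_le hm with rfl | hlt
    · exact le_refl _
    · exact le_trans hnspec.le (hnmin m hlt)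
  · -- N < n
    by_contra hle
    push_neg at hle
    exact absurd (hm0min n (Finset.mem_range.mpr (Nat.lt_succ_of_le hle))) (not_le.mpr hnspec)
end
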